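/- arXiv:math/0603455 — 2 statements merged into one kernel-verified Lean document; each statement's English description precedes it below -/
import Mathlib

section
/- Let G be a finite group, X a topological space with trivial G-action (or more generally any G-space), S a finite set with discrete topology and trivial G-action, and α : S → X/G a continuous map where X/G carries the quotient topology from the G-action on X. Then the pullback p(S) of α along the quotient map π : X → X/G, taken in the category of G-spaces, is a finite G-set (i.e., a finite discrete space with continuous G-action) satisfying p(S)/G ≅ S. -/
/-- The orbit-space quotient of a `G`-space `X`. -/
abbrev orbitQuot (G X : Type*) [Group G] [MulAction G X] :=
  Quotient (MulAction.orbitRel G X)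

/-- The pullback of `α : S → X/G` along the quotient map `π : X → X/G`,
with `G` acting on the second coordinate. -/
def pullbackOfQuot {G X : Type*} [Group G] [MulAction G X] (S : Type*)
    (α : S → orbitQuot G X) : Type _ :=
  {p : S × X // α p.1 = Quotient.mk (MulAction.orbitRel G X) p.2}

instance {G X : Type*} [Group G] [MulAction G X] (S : Type*)
    (α : S → orbitQuot G X) : MulAction G (pullbackOfQuot S α) where
  smul g p := ⟨(p.1.1, g • p.1.2), by
    rcases p with ⟨⟨s, x⟩, h⟩
    exact h.trans (Quotient.sound (MulAction.orbitRel_apply.mpr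
      (MulAction.mem_orbit x g))).symm⟩
  one_smul p := Subtype.ext (Prod.ext rfl (one_smul G _))
  mul_smul g h p := Subtype.ext (Prod.ext rfl (mul_smul g h _))

/-- For a finite group `G`, a `G`-space `X` with continuous action,
a finite (discrete) set `S` and a continuous map `α : S → X/G`, the pullback of `α`
along the quotient map `π : X → X/G` in `G`-spaces is a finite `G`-set whose orbit
space is isomorphic to `S` via the first projection. -/
theorem pullback_finite_and_quotient_equiv
    (G : Type*) [Group G] [Finite G]
    (X : Type*) [TopologicalSpace X] [MulAction G X]
    (hcont : ∀ g : G, Continuous fun x : X => g • x)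
    (S : Type*) [Finite S] [TopologicalSpace S] [DiscreteTopology S]
    (α : S → orbitQuot G X) (hα : Continuous α) :
    Finite (pullbackOfQuot S α) ∧
      ∃ e : Quotient (MulAction.orbitRel G (pullbackOfQuot S α)) ≃ S,
        ∀ p : pullbackOfQuot S α, e ⟦p⟧ = p.1.1 := by
  have hsmul : ∀ (g : G) (p : pullbackOfQuot S α),
      g • p = ⟨(p.1.1, g • p.1.2), (g • p).2⟩ := fun _ _ => rfl
  constructor
  · -- surjection from S × G
    apply Finite.of_surjective (f := fun sg : S × G =>
      (⟨(sg.1, sg.2 • (α sg.1).out),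
        ((Quotient.sound (MulAction.orbitRel_apply.mpr
          (MulAction.mem_orbit _ sg.2))).trans (Quotient.out_eq _)).symm⟩ :
        pullbackOfQuot S α))
    rintro ⟨⟨s, x⟩, h⟩
    have hx : Quotient.mk (MulAction.orbitRel G X) x
        = Quotient.mk (MulAction.orbitRel G X) (α s).out :=
      h.symm.trans (Quotient.out_eq _).symm
    obtain ⟨g, hg⟩ := MulAction.orbitRel_apply.mp (Quotient.exact hx)
    exact ⟨(s, g), Subtype.ext (Prod.ext rfl hg)⟩
  · refine ⟨Equiv.ofBijective
      (Quotient.lift (fun p : pullbackOfQuot S α => p.1.1) ?_) ⟨?_, ?_⟩, fun p => rfl⟩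
    · rintro p q ⟨g, rfl⟩
      rfl
    · rintro ⟨p⟩ ⟨q⟩ (h : p.1.1 = q.1.1)
      refine Quotient.sound ?_
      have hx : Quotient.mk (MulAction.orbitRel G X) p.1.2
          = Quotient.mk (MulAction.orbitRel G X) q.1.2 := by
        rw [← p.2, ← q.2, h]
      obtain ⟨g, hg⟩ := MulAction.orbitRel_apply.mp (Quotient.exact hx)
      exact MulAction.orbitRel_apply.mpr ⟨g, Subtype.ext (Prod.ext h.symm hg)⟩
    · intro s
      exact ⟨⟦⟨(s, (α s).out), (Quotient.out_eq _).symm⟩⟧, rfl⟩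
end

section
/- Let G be a finite group acting on a simplicial set K (i.e., K is a simplicial object in G-sets), and let H ≤ G. Then the geometric realization of the fixed-point simplicial set K^H is naturally homeomorphic to the H-fixed points of the geometric realization |K|: |K^H| ≅ |K|^H. -/
open CategoryTheory CategoryTheory.Limits SimplexCategory Topology
open scoped NNReal

noncomputable section

namespace GFix

/-- the topological simplex (replacement for the removed Mathlib definition) -/
abbrev _root_.SimplexCategory.toTopObj (X : SimplexCategory) : Type :=
  SimplexCategory.toTop.{0}.obj X

instance coeFunToTopObj (X : SimplexCategory) :
    CoeFun X.toTopObj (fun _ => Fin (X.len+1) → ℝ) :=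
  ⟨fun t => ⇑(ULift.down t : stdSimplex ℝ (Fin (X.len+1)))⟩

abbrev _root_.SimplexCategory.toTopMap {X Y : SimplexCategory} (f : X ⟶ Y) (t : X.toTopObj) :
    Y.toTopObj :=
  SimplexCategory.toTop.{0}.map f t

lemma _root_.SimplexCategory.toTopObj.ext {X : SimplexCategory} {s t : X.toTopObj}
    (h : (s : Fin (X.len+1) → ℝ) = t) : s = t :=
  ULift.ext _ _ (stdSimplex.ext h)

lemma _root_.SimplexCategory.coe_toTopMap {X Y : SimplexCategory} (f : X ⟶ Y) (g : X.toTopObj)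
    (i : Fin (Y.len+1)) :
    toTopMap f g i = ∑ j ∈ Finset.univ.filter (fun x => f.toOrderHom x = i), g j := by
  show (stdSimplex.map _ (ULift.down g)) i = _
  rw [stdSimplex.map_coe, FunOnFinite.linearMap_apply_apply]
  rfl

lemma _root_.SimplexCategory.continuous_toTopMap {X Y : SimplexCategory} (f : X ⟶ Y) :
    Continuous (toTopMap f) :=
  (SimplexCategory.toTop.{0}.map f).hom.continuous

instance t2ToTopObj (X : SimplexCategory) : T2Space X.toTopObj :=
  inferInstanceAs (T2Space (ULift (stdSimplex ℝ (Fin (X.len+1)))))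

/-- interior point of a topological simplex -/
def IsInterior {X : SimplexCategory} (t : X.toTopObj) : Prop := ∀ i, t i ≠ 0

instance homFinite (a b : SimplexCategory) : Finite (a ⟶ b) :=
  Finite.of_injective (fun f => (f.toOrderHom : Fin (a.len+1) → Fin (b.len+1)))
    (fun f g h => by
      apply SimplexCategory.Hom.ext
      exact OrderHom.ext _ _ h)

instance compactToTopObj (X : SimplexCategory) : CompactSpace X.toTopObj := by
  exact inferInstanceAs (CompactSpace (ULift (stdSimplex ℝ (Fin (X.len+1)))))


/-- interior preserved by epis -/
lemma isInterior_toTopMap {X Y : SimplexCategory} (σ : X ⟶ Y) (hσ : Epi σ) {s : X.toTopObj}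
    (hs : IsInterior s) : IsInterior (toTopMap σ s) := by
  intro i
  rw [SimplexCategory.coe_toTopMap]
  obtain ⟨j, hj⟩ := (epi_iff_surjective.mp hσ) i
  intro h0
  rw [Finset.sum_eq_zero_iff_of_nonneg (fun j _ => stdSimplex.zero_le (ULift.down s) j)] at h0
  exact hs j (h0 j (by simp only [Finset.mem_filter, Finset.mem_univ, true_and]; exact hj))

/-- coordinates of toTopMap along a mono -/
lemma toTopMap_mono_apply {X Y : SimplexCategory} (d : X ⟶ Y) (hd : Mono d) (s : X.toTopObj) :
    ∀ i : Fin (Y.len+1),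
      (toTopMap d s : _ → ℝ) i = if h : ∃ j, d.toOrderHom j = i then s h.choose else 0 := by
  classical
  intro i
  rw [SimplexCategory.coe_toTopMap]
  split
  · next h =>
    refine Finset.sum_eq_single_of_mem h.choose
      (by simp only [Finset.mem_filter, Finset.mem_univ, true_and]; exact h.choose_spec) ?_
    intro j hj hne
    rw [Finset.mem_filter] at hj
    exact absurd (mono_iff_injective.mp hd (hj.2.trans h.choose_spec.symm)) hne
  · next h =>
    apply Finset.sum_eq_zero
    intro j hj
    rw [Finset.mem_filter] at hj
    exact absurd ⟨j, hj.2⟩ h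


lemma exists_support {X : SimplexCategory} (t : X.toTopObj) :
    ∃ (Y : SimplexCategory) (d : Y ⟶ X) (s : Y.toTopObj),
      Mono d ∧ IsInterior s ∧ toTopMap d s = t := by
  classical
  set S : Finset (Fin (X.len+1)) := Finset.univ.filter (fun i => t i ≠ 0) with hS
  have hsum : ∑ i, (t : _ → ℝ) i = 1 := (ULift.down t).2.2
  have hSne : S.Nonempty := by
    by_contra hne
    rw [Finset.not_nonempty_iff_eq_empty] at hne
    have : ∑ i, (t : _ → ℝ) i = 0 := by
      apply Finset.sum_eq_zero
      intro i _
      by_contra h0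
      have : i ∈ S := by simp [hS, h0]
      simp [hne] at this
    rw [hsum] at this
    exact one_ne_zero this
  have hc : S.card = (S.card - 1) + 1 := (Nat.succ_pred_eq_of_pos (Finset.card_pos.mpr hSne)).symm
  let e := S.orderIsoOfFin hc
  let Y : SimplexCategory := SimplexCategory.mk (S.card - 1)
  let dOH : Fin (S.card - 1 + 1) →o Fin (X.len + 1) :=
    ⟨fun j => (e j : Fin (X.len+1)), fun a b hab => Subtype.coe_le_coe.mpr (e.monotone hab)⟩
  let d : Y ⟶ X := SimplexCategory.mkHom dOH
  have hdOH : ∀ j, d.toOrderHom j = (e j : Fin (X.len+1)) := fun j => rfl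
  have hdinj : Function.Injective d.toOrderHom := by
    intro a b hab
    exact e.injective (Subtype.ext hab)
  have hmono : Mono d := mono_iff_injective.mpr hdinj
  have hsdef : ∀ j, t (d.toOrderHom j) ≠ 0 := by
    intro j
    exact (Finset.mem_filter.mp (e j).2).2
  have hmemS : ∀ i, i ∈ S ↔ t i ≠ 0 := by
    intro i
    constructor
    · intro hi; exact (Finset.mem_filter.mp hi).2
    · intro hi; exact Finset.mem_filter.mpr ⟨Finset.mem_univ i, hi⟩
  let s : Y.toTopObj := ⟨fun j => t (d.toOrderHom j), fun j => stdSimplex.zero_le _ _, by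
    show ∑ j, (t (d.toOrderHom j) : ℝ) = 1
    rw [show ∑ j, (t (d.toOrderHom j) : ℝ) = ∑ i ∈ S, t i from
      (Finset.sum_bij (fun j _ => d.toOrderHom j) (fun j _ => (e j).2)
        (fun a _ b _ hab => hdinj hab)
        (fun i hi => ⟨e.symm ⟨i, hi⟩, Finset.mem_univ _, by
          simp only [hdOH]
          rw [OrderIso.apply_symm_apply]⟩)
        (fun j _ => rfl))]
    rw [Finset.sum_subset (Finset.subset_univ S) (fun x _ hx => by
      by_contra h0
      exact hx (Finset.mem_filter.mpr ⟨Finset.mem_univ x, h0⟩))]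
    exact hsum⟩
  refine ⟨Y, d, s, hmono, fun j => hsdef j, ?_⟩
  apply SimplexCategory.toTopObj.ext
  funext i
  rw [toTopMap_mono_apply d hmono s i]
  split
  · next h =>
    show (t (d.toOrderHom h.choose) : ℝ) = t i
    rw [h.choose_spec]
  · next h =>
    by_contra h0
    have hi : t i ≠ 0 := fun hh => h0 (by rw [hh])
    exact h ⟨e.symm ⟨i, (hmemS i).mpr hi⟩, by
      simp only [hdOH]
      rw [OrderIso.apply_symm_apply]⟩

lemma range_toOrderHom_of_support {X Y : SimplexCategory} {d : Y ⟶ X} (hd : Mono d)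
    {s : Y.toTopObj} (hs : IsInterior s) :
    ∀ i, (∃ j, d.toOrderHom j = i) ↔ (toTopMap d s : _ → ℝ) i ≠ 0 := by
  intro i
  rw [toTopMap_mono_apply d hd s i]
  constructor
  · intro h
    rw [dif_pos h]
    exact hs _
  · intro h
    by_contra hne
    rw [dif_neg hne] at h
    exact h rfl

lemma support_unique {X Y Y' : SimplexCategory} {d : Y ⟶ X} {d' : Y' ⟶ X} (hd : Mono d)
    (hd' : Mono d') {s : Y.toTopObj} {s' : Y'.toTopObj} (hs : IsInterior s) (hs' : IsInterior s')
    (h : toTopMap d s = toTopMap d' s') :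
    ∃ _ : Y = Y', HEq d d' ∧ HEq s s' := by
  classical
  have hrange : Set.range d.toOrderHom = Set.range d'.toOrderHom := by
    ext i
    simp only [Set.mem_range]
    rw [range_toOrderHom_of_support hd hs i, range_toOrderHom_of_support hd' hs' i, h]
  have hinj : Function.Injective d.toOrderHom := mono_iff_injective.mp hd
  have hinj' : Function.Injective d'.toOrderHom := mono_iff_injective.mp hd'
  have hYY' : Y = Y' := by
    apply SimplexCategory.ext
    have c1 : Nat.card (Set.range (d.toOrderHom : Fin (Y.len+1) → Fin (X.len+1))) = Y.len + 1 := by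
      rw [Nat.card_range_of_injective hinj, Nat.card_eq_fintype_card, Fintype.card_fin]
    have c2 : Nat.card (Set.range (d'.toOrderHom : Fin (Y'.len+1) → Fin (X.len+1))) = Y'.len + 1 := by
      rw [Nat.card_range_of_injective hinj', Nat.card_eq_fintype_card, Fintype.card_fin]
    rw [hrange, c2] at c1
    omega
  subst hYY'
  have hdd' : d = d' := by
    have hsm : StrictMono d.toOrderHom := d.toOrderHom.monotone.strictMono_of_injective hinj
    have hsm' : StrictMono d'.toOrderHom := d'.toOrderHom.monotone.strictMono_of_injective hinj'
    haveI : WellFoundedLT (Fin (Y.len + 1)) := Finite.to_wellFoundedLT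
    have := (hsm.range_inj hsm').mp hrange
    apply SimplexCategory.Hom.ext
    exact OrderHom.ext _ _ this
  subst hdd'
  refine ⟨rfl, HEq.rfl, heq_of_eq ?_⟩
  apply SimplexCategory.toTopObj.ext
  funext j
  have h1 : (toTopMap d s : Fin (X.len+1) → ℝ) (d.toOrderHom j) =
      (toTopMap d s' : Fin (X.len+1) → ℝ) (d.toOrderHom j) := by rw [h]
  rw [toTopMap_mono_apply d hd s _, toTopMap_mono_apply d hd s' _] at h1
  have hex : ∃ j', d.toOrderHom j' = d.toOrderHom j := ⟨j, rfl⟩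
  rw [dif_pos hex, dif_pos hex] at h1
  have hj : hex.choose = j := hinj hex.choose_spec
  rw [hj] at h1
  exact h1


lemma exists_min_max_section {X Y : SimplexCategory} (σ : X ⟶ Y) (hσ : Epi σ) :
    ∃ u v : Y ⟶ X, (u ≫ σ = 𝟙 Y) ∧ (v ≫ σ = 𝟙 Y) ∧
      (∀ j, u.toOrderHom (σ.toOrderHom j) ≤ j) ∧ (∀ j, j ≤ v.toOrderHom (σ.toOrderHom j)) := by
  classical
  have hsur := epi_iff_surjective.mp hσ
  let F : Fin (Y.len+1) → Finset (Fin (X.len+1)) :=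
    fun i => Finset.univ.filter (fun j => σ.toOrderHom j = i)
  have hFne : ∀ i, (F i).Nonempty := by
    intro i
    obtain ⟨j, hj⟩ := hsur i
    exact ⟨j, Finset.mem_filter.mpr ⟨Finset.mem_univ j, hj⟩⟩
  have hmemF : ∀ i j, j ∈ F i ↔ σ.toOrderHom j = i := by
    intro i j
    constructor
    · intro hj; exact (Finset.mem_filter.mp hj).2
    · intro hj; exact Finset.mem_filter.mpr ⟨Finset.mem_univ j, hj⟩
  have humon : Monotone (fun i => (F i).min' (hFne i)) := by
    intro a b hab
    by_contra hlt
    push_neg at hlt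
    have h1 : σ.toOrderHom ((F b).min' (hFne b)) = b := (hmemF b _).mp ((F b).min'_mem (hFne b))
    have h2 : σ.toOrderHom ((F a).min' (hFne a)) = a := (hmemF a _).mp ((F a).min'_mem (hFne a))
    have := σ.toOrderHom.monotone hlt.le
    rw [h1, h2] at this
    have hba : a = b := le_antisymm hab this
    subst hba
    exact absurd rfl hlt.ne'
  have hvmon : Monotone (fun i => (F i).max' (hFne i)) := by
    intro a b hab
    by_contra hlt
    push_neg at hlt
    have h1 : σ.toOrderHom ((F b).max' (hFne b)) = b := (hmemF b _).mp ((F b).max'_mem (hFne b))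
    have h2 : σ.toOrderHom ((F a).max' (hFne a)) = a := (hmemF a _).mp ((F a).max'_mem (hFne a))
    have := σ.toOrderHom.monotone hlt.le
    rw [h1, h2] at this
    have hba : a = b := le_antisymm hab this
    subst hba
    exact absurd rfl hlt.ne'
  refine ⟨SimplexCategory.Hom.mk ⟨fun i => (F i).min' (hFne i), humon⟩,
    SimplexCategory.Hom.mk ⟨fun i => (F i).max' (hFne i), hvmon⟩, ?_, ?_, ?_, ?_⟩
  · apply SimplexCategory.Hom.ext
    apply OrderHom.ext
    funext i
    rw [SimplexCategory.comp_toOrderHom, SimplexCategory.id_toOrderHom]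
    exact (hmemF i _).mp ((F i).min'_mem (hFne i))
  · apply SimplexCategory.Hom.ext
    apply OrderHom.ext
    funext i
    rw [SimplexCategory.comp_toOrderHom, SimplexCategory.id_toOrderHom]
    exact (hmemF i _).mp ((F i).max'_mem (hFne i))
  · intro j
    exact (F _).min'_le j ((hmemF _ j).mpr rfl)
  · intro j
    exact (F _).le_max' j ((hmemF _ j).mpr rfl)

lemma epi_eq_of_sections {X Y : SimplexCategory} {σ σ' : X ⟶ Y} (hσ : Epi σ)
    (h : ∀ u : Y ⟶ X, u ≫ σ = 𝟙 Y → u ≫ σ' = 𝟙 Y) : σ' = σ := by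
  obtain ⟨u, v, hu, hv, humin, hvmax⟩ := exists_min_max_section σ hσ
  have hu' := h u hu
  have hv' := h v hv
  have happ : ∀ (w : Y ⟶ X), w ≫ σ' = 𝟙 Y → ∀ i, σ'.toOrderHom (w.toOrderHom i) = i := by
    intro w hw i
    have := congrArg (fun f => SimplexCategory.Hom.toOrderHom f i) hw
    simpa [SimplexCategory.comp_toOrderHom, SimplexCategory.id_toOrderHom] using this
  apply SimplexCategory.Hom.ext
  apply OrderHom.ext
  funext j
  apply le_antisymm
  · calc σ'.toOrderHom j ≤ σ'.toOrderHom (v.toOrderHom (σ.toOrderHom j)) :=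
          σ'.toOrderHom.monotone (hvmax j)
      _ = σ.toOrderHom j := happ v hv' _
  · calc σ.toOrderHom j = σ'.toOrderHom (u.toOrderHom (σ.toOrderHom j)) := (happ u hu' _).symm
      _ ≤ σ'.toOrderHom j := σ'.toOrderHom.monotone (humin j)


open Opposite

/-- nondegenerate simplex -/
def Nondeg (P : SSet) {X : SimplexCategory} (x : P.obj (op X)) : Prop :=
  ∀ ⦃Y : SimplexCategory⦄ (σ : X ⟶ Y), Epi σ → ∀ y : P.obj (op Y), x = P.map σ.op y → IsIso σ

lemma isIso_of_epi_of_le {X Y : SimplexCategory} (σ : X ⟶ Y) (hσ : Epi σ)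
    (h : X.len ≤ Y.len) : IsIso σ := by
  have hYX : Y = X := SimplexCategory.ext (le_antisymm (haveI := hσ; len_le_of_epi σ) h)
  subst hYX
  haveI := hσ
  rw [SimplexCategory.eq_id_of_epi σ]
  infer_instance

lemma ez_exists_aux (P : SSet) : ∀ (n : ℕ) {X : SimplexCategory}, X.len ≤ n →
    ∀ (x : P.obj (op X)),
    ∃ (Z : SimplexCategory) (σ : X ⟶ Z) (y : P.obj (op Z)), Epi σ ∧ Nondeg P y ∧
      x = P.map σ.op y := by
  intro n
  induction n with
  | zero =>
    intro X hX x
    refine ⟨X, 𝟙 X, x, inferInstance, ?_, by simp⟩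
    intro Y σ hσ y hy
    exact isIso_of_epi_of_le σ hσ (hX.trans (Nat.zero_le _))
  | succ n ih =>
    intro X hX x
    by_cases h : Nondeg P x
    · exact ⟨X, 𝟙 X, x, inferInstance, h, by simp⟩
    · simp only [Nondeg, not_forall] at h
      obtain ⟨Y, σ, hσ, y, hxy, hniso⟩ := h
      have hlt : Y.len < X.len := by
        rcases lt_or_ge Y.len X.len with h1 | h1
        · exact h1
        · exact absurd (isIso_of_epi_of_le σ hσ h1) hniso
      obtain ⟨Z, τ, z, hτ, hz, hyz⟩ := ih (by omega) y
      refine ⟨Z, σ ≫ τ, z, epi_comp σ τ, hz, ?_⟩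
      rw [op_comp, FunctorToTypes.map_comp_apply, ← hyz, ← hxy]

lemma ez_exists (P : SSet) {X : SimplexCategory} (x : P.obj (op X)) :
    ∃ (Z : SimplexCategory) (σ : X ⟶ Z) (y : P.obj (op Z)), Epi σ ∧ Nondeg P y ∧
      x = P.map σ.op y :=
  ez_exists_aux P X.len le_rfl x

lemma ez_unique_aux (P : SSet) {X Z Z' : SimplexCategory} {σ : X ⟶ Z} {σ' : X ⟶ Z'}
    {y : P.obj (op Z)} {y' : P.obj (op Z')}
    (hy : Nondeg P y) (h : P.map σ.op y = P.map σ'.op y') :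
    ∀ u : Z ⟶ X, u ≫ σ = 𝟙 Z → Mono (u ≫ σ') := by
  intro u hu
  have hyrep : y = P.map ((u ≫ σ').op) y' := by
    have h1 : y = P.map ((u ≫ σ).op) y := by rw [hu]; simp
    rw [op_comp, FunctorToTypes.map_comp_apply] at h1
    rw [h, ← FunctorToTypes.map_comp_apply, ← op_comp] at h1
    exact h1
  set g := u ≫ σ' with hg
  have hfac : factorThruImage g ≫ image.ι g = g := image.fac g
  have hyrep2 : y = P.map (factorThruImage g).op (P.map (image.ι g).op y') := by
    rw [← FunctorToTypes.map_comp_apply, ← op_comp, hfac]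
    exact hyrep
  haveI : IsIso (factorThruImage g) := hy (factorThruImage g) inferInstance _ hyrep2
  rw [← hfac]
  exact mono_comp _ _

lemma ez_unique (P : SSet) {X Z Z' : SimplexCategory} {σ : X ⟶ Z} {σ' : X ⟶ Z'}
    (hσ : Epi σ) (hσ' : Epi σ') {y : P.obj (op Z)} {y' : P.obj (op Z')}
    (hy : Nondeg P y) (hy' : Nondeg P y') (h : P.map σ.op y = P.map σ'.op y') :
    ∃ _ : Z = Z', HEq σ σ' ∧ HEq y y' := by
  obtain ⟨u₀, -, hu₀, -, -, -⟩ := exists_min_max_section σ hσ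
  obtain ⟨u₁, -, hu₁, -, -, -⟩ := exists_min_max_section σ' hσ'
  have hm₀ : Mono (u₀ ≫ σ') := ez_unique_aux P hy h u₀ hu₀
  have hm₁ : Mono (u₁ ≫ σ) := ez_unique_aux P hy' h.symm u₁ hu₁
  have hZZ' : Z = Z' := by
    apply SimplexCategory.ext
    have h1 : Z.len ≤ Z'.len := (haveI := hm₀; len_le_of_mono (u₀ ≫ σ'))
    have h2 : Z'.len ≤ Z.len := (haveI := hm₁; len_le_of_mono (u₁ ≫ σ))
    omega
  subst hZZ'
  have hσσ' : σ' = σ := by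
    apply epi_eq_of_sections hσ
    intro u hu
    haveI := ez_unique_aux P hy h u hu
    exact SimplexCategory.eq_id_of_mono (u ≫ σ')
  subst hσσ'
  refine ⟨rfl, HEq.rfl, heq_of_eq ?_⟩
  have hyrep : y = P.map ((u₀ ≫ σ').op) y' := by
    have h1 : y = P.map ((u₀ ≫ σ').op) y := by rw [hu₀]; simp
    rw [op_comp, FunctorToTypes.map_comp_apply] at h1
    rw [h, ← FunctorToTypes.map_comp_apply, ← op_comp] at h1
    exact h1
  rw [hu₀] at hyrep
  simpa using hyrep

/-- The set of "points" data of a simplicial set. -/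
def Pt (P : SSet) : Type := Σ (X : SimplexCategory), P.obj (op X) × X.toTopObj

def IsNF (P : SSet) (p : Pt P) : Prop := Nondeg P p.2.1 ∧ IsInterior p.2.2

noncomputable def suppD {X : SimplexCategory} (t : X.toTopObj) :
    Σ (Y : SimplexCategory), (Y ⟶ X) × Y.toTopObj :=
  ⟨(exists_support t).choose, (exists_support t).choose_spec.choose,
    (exists_support t).choose_spec.choose_spec.choose⟩

lemma suppD_spec {X : SimplexCategory} (t : X.toTopObj) :
    Mono (suppD t).2.1 ∧ IsInterior (suppD t).2.2 ∧ toTopMap (suppD t).2.1 (suppD t).2.2 = t :=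
  (exists_support t).choose_spec.choose_spec.choose_spec

noncomputable def ezD (P : SSet) {X : SimplexCategory} (x : P.obj (op X)) :
    Σ (Z : SimplexCategory), (X ⟶ Z) × P.obj (op Z) :=
  ⟨(ez_exists P x).choose, (ez_exists P x).choose_spec.choose,
    (ez_exists P x).choose_spec.choose_spec.choose⟩

lemma ezD_spec (P : SSet) {X : SimplexCategory} (x : P.obj (op X)) :
    Epi (ezD P x).2.1 ∧ Nondeg P (ezD P x).2.2 ∧ x = P.map (ezD P x).2.1.op (ezD P x).2.2 :=
  (ez_exists P x).choose_spec.choose_spec.choose_spec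

/-- normal form -/
noncomputable def nf (P : SSet) (p : Pt P) : Pt P :=
  ⟨(ezD P (P.map (suppD p.2.2).2.1.op p.2.1)).1,
   (ezD P (P.map (suppD p.2.2).2.1.op p.2.1)).2.2,
   toTopMap (ezD P (P.map (suppD p.2.2).2.1.op p.2.1)).2.1 (suppD p.2.2).2.2⟩

lemma isNF_nf (P : SSet) (p : Pt P) : IsNF P (nf P p) := by
  obtain ⟨X, x, t⟩ := p
  refine ⟨(ezD_spec P _).2.1, ?_⟩
  exact isInterior_toTopMap _ (ezD_spec P _).1 (suppD_spec t).2.1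

lemma toTopMap_id (X : SimplexCategory) : ∀ t, toTopMap (𝟙 X) t = t := by
  intro t
  show (SimplexCategory.toTop.{0}.map (𝟙 X)) t = t
  rw [CategoryTheory.Functor.map_id]
  rfl

lemma toTopMap_comp {X Y Z : SimplexCategory} (f : X ⟶ Y) (g : Y ⟶ Z) :
    ∀ t, toTopMap (f ≫ g) t = toTopMap g (toTopMap f t) := by
  intro t
  show (SimplexCategory.toTop.{0}.map (f ≫ g)) t = _
  rw [CategoryTheory.Functor.map_comp]
  rfl

lemma nf_eq_of_presentation (P : SSet) {X : SimplexCategory} {x : P.obj (op X)} {t : X.toTopObj}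
    {Y : SimplexCategory} {d : Y ⟶ X} (hd : Mono d) {s : Y.toTopObj} (hs : IsInterior s)
    (hts : toTopMap d s = t)
    {Z : SimplexCategory} {σ : Y ⟶ Z} (hσ : Epi σ) {y : P.obj (op Z)} (hy : Nondeg P y)
    (hxy : P.map d.op x = P.map σ.op y) :
    nf P ⟨X, x, t⟩ = ⟨Z, y, toTopMap σ s⟩ := by
  rcases hsq : suppD t with ⟨Y₀, d₀, s₀⟩
  have hsupp := suppD_spec t
  rw [hsq] at hsupp
  obtain ⟨hd₀, hs₀, hts₀⟩ := hsupp
  obtain ⟨hYY, hdd, hss⟩ := support_unique hd₀ hd hs₀ hs (hts₀.trans hts.symm)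
  subst hYY
  have hd_eq : d₀ = d := eq_of_heq hdd
  have hs_eq : s₀ = s := eq_of_heq hss
  subst hd_eq
  subst hs_eq
  rcases hezq : ezD P (P.map d₀.op x) with ⟨Z₀, σ₀, y₀⟩
  have hez := ezD_spec P (P.map d₀.op x)
  rw [hezq] at hez
  obtain ⟨hσ₀, hy₀, hrep₀⟩ := hez
  obtain ⟨hZZ, hσσ, hyy⟩ := ez_unique P hσ₀ hσ hy₀ hy (hrep₀.symm.trans hxy)
  subst hZZ
  have hσ_eq : σ₀ = σ := eq_of_heq hσσ
  have hy_eq : y₀ = y := eq_of_heq hyy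
  show (⟨(ezD P (P.map (suppD t).2.1.op x)).1,
    (ezD P (P.map (suppD t).2.1.op x)).2.2,
    toTopMap (ezD P (P.map (suppD t).2.1.op x)).2.1 (suppD t).2.2⟩ : Pt P) = _
  rw [hsq]
  show (⟨(ezD P (P.map d₀.op x)).1, (ezD P (P.map d₀.op x)).2.2,
    toTopMap (ezD P (P.map d₀.op x)).2.1 s₀⟩ : Pt P) = _
  rw [hezq]
  show (⟨Z₀, y₀, toTopMap σ₀ s₀⟩ : Pt P) = _
  rw [hσ_eq, hy_eq]

lemma nf_eq_self (P : SSet) {p : Pt P} (hp : IsNF P p) : nf P p = p := by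
  obtain ⟨X, x, t⟩ := p
  have := nf_eq_of_presentation P (inferInstance : Mono (𝟙 X)) hp.2 (toTopMap_id X t)
    (inferInstance : Epi (𝟙 X)) hp.1 (rfl : P.map (𝟙 X).op x = P.map (𝟙 X).op x)
  rw [this, toTopMap_id]

lemma nf_map (P : SSet) {W X : SimplexCategory} (f : W ⟶ X) (x : P.obj (op X))
    (t : W.toTopObj) :
    nf P ⟨W, P.map f.op x, t⟩ = nf P ⟨X, x, toTopMap f t⟩ := by
  rcases hsq : suppD t with ⟨Y, d, s⟩
  have hsupp := suppD_spec t
  rw [hsq] at hsupp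
  obtain ⟨hd, hs, hts⟩ := hsupp
  rcases hezq : ezD P (P.map d.op (P.map f.op x)) with ⟨Z, σ, y⟩
  have hez := ezD_spec P (P.map d.op (P.map f.op x))
  rw [hezq] at hez
  obtain ⟨hσ, hy, hrep⟩ := hez
  have hLHS : nf P ⟨W, P.map f.op x, t⟩ = ⟨Z, y, toTopMap σ s⟩ :=
    nf_eq_of_presentation P hd hs hts hσ hy hrep
  -- right side
  set g := d ≫ f with hg
  have hfac : factorThruImage g ≫ image.ι g = g := image.fac g
  rcases hezq' : ezD P (P.map (image.ι g).op x) with ⟨Z', σ', y'⟩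
  have hez' := ezD_spec P (P.map (image.ι g).op x)
  rw [hezq'] at hez'
  obtain ⟨hσ', hy', hrep'⟩ := hez'
  have hRHS : nf P ⟨X, x, toTopMap f t⟩ =
      ⟨Z', y', toTopMap σ' (toTopMap (factorThruImage g) s)⟩ := by
    refine nf_eq_of_presentation P (inferInstance : Mono (image.ι g))
      (isInterior_toTopMap _ inferInstance hs) ?_ hσ' hy' hrep'
    rw [← toTopMap_comp, hfac, hg, toTopMap_comp, hts]
  -- relate the two EZ decompositions
  have hx1 : P.map d.op (P.map f.op x) = P.map (factorThruImage g ≫ σ').op y' := by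
    have e1 : P.map (factorThruImage g ≫ σ').op y' =
        P.map (factorThruImage g).op (P.map σ'.op y') := by
      rw [op_comp, FunctorToTypes.map_comp_apply]
    rw [e1, ← hrep', ← FunctorToTypes.map_comp_apply, ← op_comp, ← FunctorToTypes.map_comp_apply,
      ← op_comp, hfac, hg]
  obtain ⟨hZZ, hσσ, hyy⟩ := ez_unique P hσ (epi_comp _ _) hy hy' (hrep.symm.trans hx1)
  subst hZZ
  have hσ_eq : σ = factorThruImage g ≫ σ' := eq_of_heq hσσ
  have hy_eq : y = y' := eq_of_heq hyy
  rw [hLHS, hRHS, hy_eq, hσ_eq, toTopMap_comp]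


/-! ### The realization as a colimit of topological simplices -/

/-- the standard simplices, as a functor -/
abbrev stdS : SimplexCategory ⥤ SSet := SSet.stdSimplex.{0}

noncomputable def leg (P : SSet.{0}) {X : SimplexCategory} (x : P.obj (op X)) :
    SimplexCategory.toTop.obj X ⟶ SSet.toTop.obj P :=
  SSet.toTopSimplex.inv.app X ≫ SSet.toTop.map (SSet.yonedaEquiv.symm x)

noncomputable def legPt (P : SSet.{0}) (p : Pt P) : SSet.toTop.obj P :=
  leg P p.2.1 p.2.2

lemma leg_naturality (P : SSet.{0}) {W X : SimplexCategory} (f : W ⟶ X) (x : P.obj (op X)) :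
    leg P (P.map f.op x) = SimplexCategory.toTop.map f ≫ leg P x := by
  have h1 : SSet.yonedaEquiv.symm (P.map f.op x) = SSet.stdSimplex.map f ≫ SSet.yonedaEquiv.symm x := by
    apply SSet.yonedaEquiv.injective
    rw [Equiv.apply_symm_apply, ← SSet.yonedaEquiv_naturality, Equiv.apply_symm_apply]
  have h2 := SSet.toTopSimplex.inv.naturality f
  dsimp [leg]
  rw [h1, SSet.toTop.map_comp, ← Category.assoc]
  have h2' : SSet.toTopSimplex.inv.app W ≫ SSet.toTop.map (SSet.stdSimplex.map f) =
      SimplexCategory.toTop.{0}.map f ≫ SSet.toTopSimplex.inv.app X := h2.symm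
  exact (congrArg (fun φ => φ ≫ SSet.toTop.map (SSet.yonedaEquiv.symm x)) h2').trans
    (Category.assoc _ _ _)

lemma leg_naturality_apply (P : SSet.{0}) {W X : SimplexCategory} (f : W ⟶ X) (x : P.obj (op X))
    (t : W.toTopObj) : (leg P (P.map f.op x)) t = (leg P x) (toTopMap f t) := by
  rw [leg_naturality]
  rfl

lemma leg_map (P Q : SSet.{0}) (g : P ⟶ Q) {X : SimplexCategory} (x : P.obj (op X)) :
    leg P x ≫ SSet.toTop.map g = leg Q (g.app (op X) x) := by
  have h1 : SSet.yonedaEquiv.symm (g.app (op X) x) = SSet.yonedaEquiv.symm x ≫ g := by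
    apply SSet.yonedaEquiv.injective
    rw [Equiv.apply_symm_apply, SSet.yonedaEquiv_comp, Equiv.apply_symm_apply]
  dsimp [leg]
  rw [h1, SSet.toTop.map_comp, Category.assoc]

lemma leg_map_apply (P Q : SSet.{0}) (g : P ⟶ Q) {X : SimplexCategory} (x : P.obj (op X))
    (t : X.toTopObj) : SSet.toTop.map g ((leg P x) t) = (leg Q (g.app (op X) x)) t := by
  rw [← leg_map P Q g x]
  rfl

noncomputable def realCocone (P : SSet.{0}) :
    Cocone (CostructuredArrow.proj stdS P ⋙ SimplexCategory.toTop) :=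
  (Functor.LeftExtension.mk SSet.toTop SSet.toTopSimplex.inv).coconeAt P

noncomputable def realCoconeIsColimit (P : SSet.{0}) : IsColimit (realCocone P) := by
  exact Functor.isPointwiseLeftKanExtensionOfIsLeftKanExtension SSet.toTop SSet.toTopSimplex.inv P

lemma realCocone_ι_app (P : SSet.{0}) (j : CostructuredArrow stdS P) :
    (realCocone P).ι.app j = leg P (SSet.yonedaEquiv j.hom) := by
  dsimp [realCocone, leg]
  rw [Equiv.symm_apply_apply]
  rfl

lemma exists_leg_rep (P : SSet.{0}) (z : SSet.toTop.obj P) :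
    ∃ p : Pt P, legPt P p = z := by
  obtain ⟨j, t, ht⟩ := Types.jointly_surjective_of_isColimit
    (isColimitOfPreserves (forget TopCat) (realCoconeIsColimit P)) z
  refine ⟨⟨j.left, SSet.yonedaEquiv j.hom, t⟩, ?_⟩
  unfold legPt
  rw [← realCocone_ι_app]
  exact ht

lemma legPt_nf (P : SSet.{0}) (p : Pt P) : legPt P (nf P p) = legPt P p := by
  obtain ⟨X, x, t⟩ := p
  rcases hsq : suppD t with ⟨Y, d, s⟩
  have hsupp := suppD_spec t
  rw [hsq] at hsupp
  obtain ⟨hd, hs, hts⟩ := hsupp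
  rcases hezq : ezD P (P.map d.op x) with ⟨Z, σ, y⟩
  have hez := ezD_spec P (P.map d.op x)
  rw [hezq] at hez
  obtain ⟨hσ, hy, hrep⟩ := hez
  have h1 : nf P ⟨X, x, t⟩ = ⟨Z, y, toTopMap σ s⟩ := nf_eq_of_presentation P hd hs hts hσ hy hrep
  rw [h1]
  show (leg P y) (toTopMap σ s) = (leg P x) t
  rw [← leg_naturality_apply, ← hrep, leg_naturality_apply, hts]

noncomputable def nfDesc (P : SSet.{0}) : SSet.toTop.obj P → Pt P := fun z =>
  (isColimitOfPreserves (forget TopCat) (realCoconeIsColimit P)).desc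
    { pt := Pt P
      ι :=
        { app := fun j => TypeCat.ofHom fun t => nf P ⟨j.left, SSet.yonedaEquiv j.hom, t⟩
          naturality := by
            intro j j' φ
            ext t
            show nf P ⟨j'.left, SSet.yonedaEquiv j'.hom, toTopMap φ.left t⟩ =
              nf P ⟨j.left, SSet.yonedaEquiv j.hom, t⟩
            have hw : SSet.stdSimplex.map φ.left ≫ j'.hom = j.hom := CostructuredArrow.w φ
            have hx : P.map φ.left.op (SSet.yonedaEquiv j'.hom) = SSet.yonedaEquiv j.hom :=
              (SSet.yonedaEquiv_naturality φ.left j'.hom).trans (congrArg SSet.yonedaEquiv hw)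
            exact (nf_map P φ.left (SSet.yonedaEquiv j'.hom) t).symm.trans
              (congrArg (fun w => nf P ⟨j.left, (w, t)⟩) hx) } } z

lemma nfDesc_leg (P : SSet.{0}) {X : SimplexCategory} (x : P.obj (op X)) (t : X.toTopObj) :
    nfDesc P ((leg P x) t) = nf P ⟨X, x, t⟩ := by
  have hfac := (isColimitOfPreserves (forget TopCat) (realCoconeIsColimit P)).fac
    { pt := Pt P
      ι :=
        { app := fun j => TypeCat.ofHom fun t => nf P ⟨j.left, SSet.yonedaEquiv j.hom, t⟩
          naturality := by
            intro j j' φ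
            ext t
            show nf P ⟨j'.left, SSet.yonedaEquiv j'.hom, toTopMap φ.left t⟩ =
              nf P ⟨j.left, SSet.yonedaEquiv j.hom, t⟩
            have hw : SSet.stdSimplex.map φ.left ≫ j'.hom = j.hom := CostructuredArrow.w φ
            have hx : P.map φ.left.op (SSet.yonedaEquiv j'.hom) = SSet.yonedaEquiv j.hom :=
              (SSet.yonedaEquiv_naturality φ.left j'.hom).trans (congrArg SSet.yonedaEquiv hw)
            exact (nf_map P φ.left (SSet.yonedaEquiv j'.hom) t).symm.trans
              (congrArg (fun w => nf P ⟨j.left, (w, t)⟩) hx) } }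
    (CostructuredArrow.mk (SSet.yonedaEquiv.symm x))
  have := ConcreteCategory.congr_hom hfac t
  dsimp at this
  rw [realCocone_ι_app] at this
  simp only [CostructuredArrow.mk_left, CostructuredArrow.mk_hom_eq_self,
    Equiv.apply_symm_apply] at this
  exact this

lemma legPt_eq_iff (P : SSet.{0}) (p q : Pt P) : legPt P p = legPt P q ↔ nf P p = nf P q := by
  constructor
  · intro h
    obtain ⟨X, x, t⟩ := p
    obtain ⟨X', x', t'⟩ := q
    have := congrArg (nfDesc P) h
    unfold legPt at this
    rwa [nfDesc_leg, nfDesc_leg] at this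
  · intro h
    rw [← legPt_nf P p, ← legPt_nf P q, h]

lemma isClosed_of_leg_preimages (P : SSet.{0}) {S : Set (SSet.toTop.obj P)}
    (h : ∀ ⦃X : SimplexCategory⦄ (x : P.obj (op X)), IsClosed ((leg P x) ⁻¹' S)) :
    IsClosed S := by
  have hc := realCoconeIsColimit P
  have htop := TopCat.coinduced_of_isColimit _ hc
  rw [← isOpen_compl_iff]
  have htop' : (SSet.toTop.obj P).str = ⨆ j, TopologicalSpace.coinduced
      ⇑((realCocone P).ι.app j) ((CostructuredArrow.proj stdS P ⋙
        SimplexCategory.toTop).obj j).str := htop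
  show IsOpen[(SSet.toTop.obj P).str] Sᶜ
  rw [htop']
  rw [isOpen_iSup_iff]
  intro j
  refine isOpen_coinduced.mpr ?_
  have := (h (SSet.yonedaEquiv j.hom)).isOpen_compl
  rw [← realCocone_ι_app] at this
  exact this


end GFix

open CategoryTheory

variable {G : Type} [Group G]

/-- The fixed-point simplicial set `K^H` of a simplicial `G`-set `K`
(a `G`-action on a simplicial set, i.e. an object of `Action SSet G`). -/
def fixedSSet (K : Action SSet (MonCat.of G)) (H : Subgroup G) : SSet where
  obj n := {x : K.V.obj n // ∀ h : H, (K.ρ (h : G)).app n x = x}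
  map f := TypeCat.ofHom fun x => ⟨K.V.map f x.1, by
    intro h
    have := ConcreteCategory.congr_hom ((K.ρ (h : G)).naturality f) x.1
    dsimp at this
    rw [this, x.2 h]⟩
  map_id := fun n => by
    ext x; simpa using Functor.map_id_apply K.V _ x.1
  map_comp := fun f g => by
    ext x; simpa using Functor.map_comp_apply K.V f g x.1

/-- The `H`-fixed points of the geometric realization `|K|`,
for the `G`-action induced functorially on the realization. -/
def fixedRealization (K : Action SSet (MonCat.of G)) (H : Subgroup G) : Type :=
  {x : SSet.toTop.obj K.V // ∀ h : H, (SSet.toTop.map (K.ρ (h : G))) x = x}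

noncomputable instance (K : Action SSet (MonCat.of G)) (H : Subgroup G) :
    TopologicalSpace (fixedRealization K H) :=
  instTopologicalSpaceSubtype

namespace GFix

open Opposite CategoryTheory.Limits SimplexCategory

variable (K : Action SSet.{0} (MonCat.of G)) (H : Subgroup G)

/-- inclusion of the fixed simplicial subset -/
def inclFixed : fixedSSet K H ⟶ K.V where
  app n := TypeCat.ofHom fun x => x.1
  naturality := fun _ _ _ => rfl

lemma rho_cancel (a b : G) (hab : b * a = 1) : K.ρ a ≫ K.ρ b = 𝟙 K.V := by
  have h1 : K.ρ a ≫ K.ρ b = K.ρ b * K.ρ a := rfl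
  rw [h1, ← map_mul, hab, map_one]
  rfl

lemma rho_cancel_apply (a b : G) (hab : b * a = 1) {n} (z : K.V.obj n) :
    (K.ρ b).app n ((K.ρ a).app n z) = z := by
  have := ConcreteCategory.congr_hom (congrArg (fun (f : K.V ⟶ K.V) => f.app n) (rho_cancel K a b hab)) z
  exact this

lemma incl_comp_rho (h : H) : inclFixed K H ≫ K.ρ (h : G) = inclFixed K H := by
  apply NatTrans.ext
  funext n
  ext x
  exact x.2 h

lemma incl_nondeg {X : SimplexCategory} (w : (fixedSSet K H).obj (op X))
    (hw : Nondeg (fixedSSet K H) w) : Nondeg K.V w.1 := by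
  intro Z σ hσ z hz
  obtain ⟨u, -, hu, -, -, -⟩ := exists_min_max_section σ hσ
  have hzw : z = K.V.map u.op w.1 := by
    rw [hz, ← FunctorToTypes.map_comp_apply, ← op_comp, hu]
    simp
  have hzfix : ∀ h : H, (K.ρ (h : G)).app (op Z) z = z := by
    intro h
    rw [hzw]
    have hnat := ConcreteCategory.congr_hom ((K.ρ (h : G)).naturality u.op) w.1
    dsimp at hnat
    rw [hnat, w.2 h]
  refine hw σ hσ ⟨z, hzfix⟩ ?_
  apply Subtype.ext
  exact hz

lemma act_nondeg (h : G) {X : SimplexCategory} (y : K.V.obj (op X)) (hy : Nondeg K.V y) :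
    Nondeg K.V ((K.ρ h).app (op X) y) := by
  intro Z σ hσ z hz
  have hyz : y = K.V.map σ.op ((K.ρ h⁻¹).app (op Z) z) := by
    have h1 : y = (K.ρ h⁻¹).app (op X) ((K.ρ h).app (op X) y) :=
      (rho_cancel_apply K h h⁻¹ (inv_mul_cancel h) y).symm
    rw [h1, hz]
    have hnat := ConcreteCategory.congr_hom ((K.ρ h⁻¹).naturality σ.op) z
    dsimp at hnat
    rw [hnat]
  exact hy σ hσ _ hyz

lemma exists_nf_rep (P : SSet.{0}) (z : SSet.toTop.obj P) :
    ∃ p : Pt P, IsNF P p ∧ legPt P p = z := by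
  obtain ⟨p, hp⟩ := exists_leg_rep P z
  exact ⟨nf P p, isNF_nf P p, (legPt_nf P p).trans hp⟩

lemma map_incl_leg {X : SimplexCategory} (w : (fixedSSet K H).obj (op X)) (s : X.toTopObj) :
    SSet.toTop.map (inclFixed K H) ((leg (fixedSSet K H) w) s) = (leg K.V w.1) s :=
  leg_map_apply (fixedSSet K H) K.V (inclFixed K H) w s

lemma sigma_eq_extract {X X' : SimplexCategory} {a : K.V.obj (op X) × X.toTopObj}
    {b : K.V.obj (op X') × X'.toTopObj}
    (h : (⟨X, a⟩ : Pt K.V) = ⟨X', b⟩) :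
    ∃ hX : X = X', HEq a b := by
  cases h
  exact ⟨rfl, HEq.rfl⟩

/-- the underlying map, with fixed-point property -/
noncomputable def fwd : SSet.toTop.obj (fixedSSet K H) → fixedRealization K H := fun z =>
  ⟨SSet.toTop.map (inclFixed K H) z, by
    intro h
    have hcomp : SSet.toTop.map (inclFixed K H) ≫ SSet.toTop.map (K.ρ (h : G)) =
        SSet.toTop.map (inclFixed K H) := by
      rw [← Functor.map_comp, incl_comp_rho]
    exact ConcreteCategory.congr_hom hcomp z⟩

lemma fwd_injective : Function.Injective (fwd K H) := by
  intro z z' hzz'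
  obtain ⟨⟨X, w, s⟩, ⟨hnd, hint⟩, hz⟩ := exists_nf_rep (fixedSSet K H) z
  obtain ⟨⟨X', w', s'⟩, ⟨hnd', hint'⟩, hz'⟩ := exists_nf_rep (fixedSSet K H) z'
  have h1 : legPt K.V ⟨X, w.1, s⟩ = legPt K.V ⟨X', w'.1, s'⟩ := by
    show (leg K.V w.1) s = (leg K.V w'.1) s'
    rw [← map_incl_leg, ← map_incl_leg]
    show SSet.toTop.map (inclFixed K H) (legPt _ ⟨X, w, s⟩) =
      SSet.toTop.map (inclFixed K H) (legPt _ ⟨X', w', s'⟩)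
    rw [hz, hz']
    exact congrArg Subtype.val hzz'
  have h2 := (legPt_eq_iff K.V _ _).mp h1
  rw [nf_eq_self K.V (p := ⟨X, (w.1, s)⟩) ⟨incl_nondeg K H w hnd, hint⟩,
    nf_eq_self K.V (p := ⟨X', (w'.1, s')⟩) ⟨incl_nondeg K H w' hnd', hint'⟩] at h2
  obtain ⟨hX, hab⟩ := sigma_eq_extract K h2
  subst hX
  have hab' := eq_of_heq hab
  have hw : w = w' := Subtype.ext (congrArg Prod.fst hab')
  have hs : s = s' := congrArg Prod.snd hab'
  rw [← hz, ← hz', hw, hs]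

lemma fwd_surjective : Function.Surjective (fwd K H) := by
  rintro ⟨u, hu⟩
  obtain ⟨⟨X, y, s⟩, ⟨hnd, hint⟩, hrep⟩ := exists_nf_rep K.V u
  have hyfix : ∀ h : H, (K.ρ (h : G)).app (op X) y = y := by
    intro h
    have h1 : legPt K.V ⟨X, (K.ρ (h : G)).app (op X) y, s⟩ = legPt K.V ⟨X, y, s⟩ := by
      show (leg K.V ((K.ρ (h : G)).app (op X) y)) s = (leg K.V y) s
      rw [← leg_map_apply K.V K.V (K.ρ (h : G)) y s]
      show SSet.toTop.map (K.ρ (h : G)) (legPt K.V ⟨X, y, s⟩) = legPt K.V ⟨X, y, s⟩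
      rw [hrep]
      exact hu h
    have h2 := (legPt_eq_iff K.V _ _).mp h1
    rw [nf_eq_self K.V (p := ⟨X, ((K.ρ (h : G)).app (op X) y, s)⟩)
        ⟨act_nondeg K (h : G) y hnd, hint⟩,
      nf_eq_self K.V (p := ⟨X, (y, s)⟩) ⟨hnd, hint⟩] at h2
    obtain ⟨-, hab⟩ := sigma_eq_extract K h2
    exact congrArg Prod.fst (eq_of_heq hab)
  refine ⟨legPt (fixedSSet K H) ⟨X, ⟨y, hyfix⟩, s⟩, ?_⟩
  apply Subtype.ext
  show SSet.toTop.map (inclFixed K H) (legPt _ ⟨X, ⟨y, hyfix⟩, s⟩) = u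
  unfold legPt
  rw [map_incl_leg]
  exact hrep

lemma closed_image {F : Set (SSet.toTop.obj (fixedSSet K H))} (hF : IsClosed F) :
    IsClosed (SSet.toTop.map (inclFixed K H) '' F) := by
  classical
  apply isClosed_of_leg_preimages
  intro X x
  let I := Σ k : Fin (X.len + 1), (SimplexCategory.mk k.1 ⟶ X)
  let C : I → Set X.toTopObj := fun i =>
    ⋃ (hw : ∀ h : H, (K.ρ (h : G)).app (op (ezD K.V (K.V.map i.2.op x)).1)
        (ezD K.V (K.V.map i.2.op x)).2.2 = (ezD K.V (K.V.map i.2.op x)).2.2),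
      toTopMap i.2 '' (toTopMap (ezD K.V (K.V.map i.2.op x)).2.1 ⁻¹'
        ((leg (fixedSSet K H) ⟨(ezD K.V (K.V.map i.2.op x)).2.2, hw⟩) ⁻¹' F))
  have hCclosed : ∀ i, IsClosed (C i) := by
    intro i
    by_cases hp : ∀ h : H, (K.ρ (h : G)).app (op (ezD K.V (K.V.map i.2.op x)).1)
        (ezD K.V (K.V.map i.2.op x)).2.2 = (ezD K.V (K.V.map i.2.op x)).2.2
    · have hCi : C i = toTopMap i.2 '' (toTopMap (ezD K.V (K.V.map i.2.op x)).2.1 ⁻¹'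
          ((leg (fixedSSet K H) ⟨(ezD K.V (K.V.map i.2.op x)).2.2, hp⟩) ⁻¹' F)) := by
        apply Set.eq_of_subset_of_subset
        · intro a ha
          obtain ⟨_, ha⟩ := Set.mem_iUnion.mp ha
          exact ha
        · intro a ha
          exact Set.mem_iUnion.mpr ⟨hp, ha⟩
      rw [hCi]
      have hpre : IsClosed (toTopMap (ezD K.V (K.V.map i.2.op x)).2.1 ⁻¹'
          ((leg (fixedSSet K H) ⟨(ezD K.V (K.V.map i.2.op x)).2.2, hp⟩) ⁻¹' F)) :=
        ((hF.preimage (leg (fixedSSet K H) _).hom.continuous).preimage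
          (continuous_toTopMap _))
      exact (hpre.isCompact.image (continuous_toTopMap _)).isClosed
    · have hCi : C i = ∅ := by
        apply Set.eq_empty_iff_forall_notMem.mpr
        intro a ha
        obtain ⟨hw, -⟩ := Set.mem_iUnion.mp ha
        exact hp hw
      rw [hCi]
      exact isClosed_empty
  have hunion : (leg K.V x) ⁻¹' (SSet.toTop.map (inclFixed K H) '' F) = ⋃ i, C i := by
    apply Set.eq_of_subset_of_subset
    · intro t ht
      obtain ⟨z, hzF, hz⟩ := ht
      obtain ⟨⟨Z', w, s'⟩, ⟨hnd', hint'⟩, hq⟩ := exists_nf_rep (fixedSSet K H) z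
      rcases hsq : suppD t with ⟨Y, d, s⟩
      have hsupp := suppD_spec t
      rw [hsq] at hsupp
      obtain ⟨hd, hs, hts⟩ := hsupp
      set E := ezD K.V (K.V.map d.op x) with hE
      have hσ : Epi E.2.1 := (ezD_spec K.V (K.V.map d.op x)).1
      have hy : Nondeg K.V E.2.2 := (ezD_spec K.V (K.V.map d.op x)).2.1
      have hrep : K.V.map d.op x = K.V.map E.2.1.op E.2.2 :=
        (ezD_spec K.V (K.V.map d.op x)).2.2
      have hchain : (leg K.V x) t = legPt K.V ⟨E.1, E.2.2, toTopMap E.2.1 s⟩ := by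
        show _ = (leg K.V E.2.2) (toTopMap E.2.1 s)
        rw [← leg_naturality_apply, ← hrep, leg_naturality_apply, hts]
      have hz2 : SSet.toTop.map (inclFixed K H) z = legPt K.V ⟨Z', w.1, s'⟩ := by
        rw [← hq]; exact map_incl_leg K H w s'
      have heq : legPt K.V ⟨E.1, E.2.2, toTopMap E.2.1 s⟩ = legPt K.V ⟨Z', w.1, s'⟩ := by
        rw [← hchain, ← hz2, hz]
      have h2 := (legPt_eq_iff K.V _ _).mp heq
      rw [nf_eq_self K.V (p := ⟨E.1, (E.2.2, toTopMap E.2.1 s)⟩)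
          ⟨hy, isInterior_toTopMap _ hσ hs⟩,
        nf_eq_self K.V (p := ⟨Z', (w.1, s')⟩) ⟨incl_nondeg K H w hnd', hint'⟩] at h2
      obtain ⟨hZZ, hab⟩ := sigma_eq_extract K h2
      subst hZZ
      have hab' := eq_of_heq hab
      have hyw : E.2.2 = w.1 := congrArg Prod.fst hab'
      have hss' : toTopMap E.2.1 s = s' := congrArg Prod.snd hab'
      have hwP : ∀ h : H, (K.ρ (h : G)).app (op E.1) E.2.2 = E.2.2 := by
        intro h
        rw [hyw]
        exact w.2 h
      have hwsub : (⟨E.2.2, hwP⟩ : (fixedSSet K H).obj (op E.1)) = w := Subtype.ext hyw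
      have hlt : Y.len < X.len + 1 := Nat.lt_succ_of_le ((haveI := hd; len_le_of_mono d))
      refine Set.mem_iUnion.mpr ⟨⟨⟨Y.len, hlt⟩, d⟩, ?_⟩
      refine Set.mem_iUnion.mpr ⟨hwP, ⟨s, ?_, hts⟩⟩
      show (leg (fixedSSet K H) ⟨E.2.2, hwP⟩) (toTopMap E.2.1 s) ∈ F
      rw [hwsub, hss']
      show legPt (fixedSSet K H) ⟨E.1, w, s'⟩ ∈ F
      rw [hq]
      exact hzF
    · intro t ht
      obtain ⟨i, hti⟩ := Set.mem_iUnion.mp ht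
      obtain ⟨hw, hti2⟩ := Set.mem_iUnion.mp hti
      obtain ⟨s₁, hs₁, hts⟩ := hti2
      set E := ezD K.V (K.V.map i.2.op x) with hE
      have hrep : K.V.map i.2.op x = K.V.map E.2.1.op E.2.2 :=
        (ezD_spec K.V (K.V.map i.2.op x)).2.2
      refine ⟨(leg (fixedSSet K H) ⟨E.2.2, hw⟩) (toTopMap E.2.1 s₁), hs₁, ?_⟩
      rw [map_incl_leg K H ⟨E.2.2, hw⟩ (toTopMap E.2.1 s₁)]
      show (leg K.V E.2.2) (toTopMap E.2.1 s₁) = _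
      rw [← leg_naturality_apply, ← hrep, leg_naturality_apply, hts]
  rw [hunion]
  exact isClosed_iUnion_of_finite hCclosed

end GFix

/-- For a finite group `G` acting on a simplicial set `K` and a
subgroup `H ≤ G`, the geometric realization of the fixed-point simplicial set `K^H`
is homeomorphic to the `H`-fixed points of the geometric realization `|K|`. -/
theorem realization_fixedSSet_homeomorph_fixed_realization
    [Finite G] (K : Action SSet (MonCat.of G)) (H : Subgroup G) :
    Nonempty ((SSet.toTop.obj (fixedSSet K H)) ≃ₜ fixedRealization K H) := by
  have hbij : Function.Bijective (GFix.fwd K H) :=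
    ⟨GFix.fwd_injective K H, GFix.fwd_surjective K H⟩
  refine ⟨Homeomorph.mk (Equiv.ofBijective (GFix.fwd K H) hbij) ?_ ?_⟩
  · exact Continuous.subtype_mk (SSet.toTop.map (GFix.inclFixed K H)).hom.continuous _
  · set e := Equiv.ofBijective (GFix.fwd K H) hbij with he
    rw [continuous_iff_isClosed]
    intro F hF
    have himg : e.symm ⁻¹' F = Subtype.val ⁻¹' (SSet.toTop.map (GFix.inclFixed K H) '' F) := by
      ext u
      simp only [Set.mem_preimage, Set.mem_image]
      constructor
      · intro hu
        exact ⟨e.symm u, hu, congrArg Subtype.val (e.apply_symm_apply u)⟩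
      · rintro ⟨z, hzF, hz⟩
        have : e z = u := Subtype.ext hz
        rw [← this, Equiv.symm_apply_apply]
        exact hzF
    show IsClosed (⇑e.symm ⁻¹' F)
    rw [himg]
    exact (GFix.closed_image K H hF).preimage continuous_subtype_val


end
end
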